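/- arXiv:1506.07757 — 3 statements merged into one kernel-verified Lean document; each statement's English description precedes it below -/
import Mathlib

section
/- Let vol₀(E) denote the Lebesgue measure of R(E) = {(x,y) ∈ ℝ² : exp(x) + exp(y) + exp(−x−y) ≤ exp(E)}. Then vol₀(E)/E² tends to 9/2 as E → +∞. -/
open Real Filter MeasureTheory

lemma vol_tri (c : ℝ) (hc : 0 ≤ c) :
    MeasureTheory.volume {p : ℝ × ℝ | p.1 ≤ c ∧ p.2 ≤ c ∧ -c ≤ p.1 + p.2}
      = ENNReal.ofReal (9 / 2 * c ^ 2) := by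
  have hS : MeasurableSet {p : ℝ × ℝ | p.1 ≤ c ∧ p.2 ≤ c ∧ -c ≤ p.1 + p.2} := by
    apply MeasurableSet.inter (measurableSet_le measurable_fst measurable_const)
    exact (measurableSet_le measurable_snd measurable_const).inter
      (measurableSet_le measurable_const (measurable_fst.add measurable_snd))
  rw [MeasureTheory.Measure.volume_eq_prod, MeasureTheory.Measure.prod_apply hS]
  have hslice : ∀ x : ℝ, volume (Prod.mk x ⁻¹' {p : ℝ × ℝ | p.1 ≤ c ∧ p.2 ≤ c ∧ -c ≤ p.1 + p.2})
      = (Set.Iic c).indicator (fun x => ENNReal.ofReal (2 * c + x)) x := by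
    intro x
    by_cases hx : x ≤ c
    · rw [Set.indicator_of_mem (Set.mem_Iic.mpr hx)]
      have : Prod.mk x ⁻¹' {p : ℝ × ℝ | p.1 ≤ c ∧ p.2 ≤ c ∧ -c ≤ p.1 + p.2}
          = Set.Icc (-c - x) c := by
        ext y
        simp only [Set.mem_preimage, Set.mem_setOf_eq, Set.mem_Icc]
        constructor
        · rintro ⟨_, h2, h3⟩; exact ⟨by linarith, h2⟩
        · rintro ⟨h1, h2⟩; exact ⟨hx, h2, by linarith⟩
      rw [this, Real.volume_Icc]
      congr 1; ring
    · rw [Set.indicator_of_notMem (by simpa using hx)]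
      have : Prod.mk x ⁻¹' {p : ℝ × ℝ | p.1 ≤ c ∧ p.2 ≤ c ∧ -c ≤ p.1 + p.2} = ∅ := by
        ext y; simp only [Set.mem_preimage, Set.mem_setOf_eq, Set.mem_empty_iff_false]
        tauto
      rw [this, measure_empty]
  rw [lintegral_congr hslice, lintegral_indicator measurableSet_Iic _]
  have hsplit : (Set.Iic c) = Set.Iio (-(2*c)) ∪ Set.Icc (-(2*c)) c := by
    rw [Set.Iio_union_Icc_eq_Iic]; linarith
  rw [hsplit, lintegral_union measurableSet_Icc (by
    intro s hs1 hs2 x hx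
    exact absurd (hs2 hx).1 (not_le.mpr (hs1 hx)))]
  have h0 : ∫⁻ x in Set.Iio (-(2*c)), ENNReal.ofReal (2 * c + x) = 0 := by
    rw [MeasureTheory.setLIntegral_congr_fun measurableSet_Iio
      (fun x hx => by
        rw [ENNReal.ofReal_eq_zero.mpr (by simp at hx; linarith)])]
    simp
  rw [h0, zero_add]
  rw [← MeasureTheory.ofReal_integral_eq_lintegral_ofReal]
  · congr 1
    rw [MeasureTheory.integral_Icc_eq_integral_Ioc, ← intervalIntegral.integral_of_le (by linarith)]
    have : ∫ x in (-(2*c))..c, (2 * c + x) = 2*c*(c - (-(2*c))) + (c^2 - (-(2*c))^2)/2 := by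
      rw [intervalIntegral.integral_add intervalIntegrable_const intervalIntegral.intervalIntegrable_id]
      rw [intervalIntegral.integral_const, integral_id]
      simp [smul_eq_mul]; ring
    rw [this]; ring
  · exact (continuous_const.add continuous_id).integrableOn_Icc
  · refine MeasureTheory.ae_restrict_of_forall_mem measurableSet_Icc ?_
    intro x hx
    have := hx.1
    simp only [Pi.zero_apply]
    linarith

theorem vol_localP2_asymptotics :
    Filter.Tendsto
      (fun E : ℝ =>
        (MeasureTheory.volume {p : ℝ × ℝ |
          Real.exp p.1 + Real.exp p.2 + Real.exp (-p.1 - p.2) ≤ Real.exp E}).toReal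
          / E ^ 2)
      Filter.atTop (nhds (9 / 2)) := by
  set R : ℝ → Set (ℝ × ℝ) := fun E => {p : ℝ × ℝ |
    Real.exp p.1 + Real.exp p.2 + Real.exp (-p.1 - p.2) ≤ Real.exp E} with hR
  -- bounds
  have hub : ∀ E : ℝ, 0 ≤ E → volume (R E) ≤ ENNReal.ofReal (9 / 2 * E ^ 2) := by
    intro E hE
    rw [← vol_tri E hE]
    apply measure_mono
    intro p hp
    simp only [hR, Set.mem_setOf_eq] at hp ⊢
    have h1 : Real.exp p.1 ≤ Real.exp E := by
      have := Real.exp_pos p.2; have := Real.exp_pos (-p.1 - p.2); linarith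
    have h2 : Real.exp p.2 ≤ Real.exp E := by
      have := Real.exp_pos p.1; have := Real.exp_pos (-p.1 - p.2); linarith
    have h3 : Real.exp (-p.1 - p.2) ≤ Real.exp E := by
      have := Real.exp_pos p.1; have := Real.exp_pos p.2; linarith
    exact ⟨Real.exp_le_exp.mp h1, Real.exp_le_exp.mp h2, by
      have := Real.exp_le_exp.mp h3; linarith⟩
  have hlb : ∀ E : ℝ, Real.log 3 ≤ E →
      ENNReal.ofReal (9 / 2 * (E - Real.log 3) ^ 2) ≤ volume (R E) := by
    intro E hE
    rw [← vol_tri (E - Real.log 3) (by linarith)]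
    apply measure_mono
    intro p hp
    simp only [Set.mem_setOf_eq] at hp
    obtain ⟨h1, h2, h3⟩ := hp
    simp only [hR, Set.mem_setOf_eq]
    have key : Real.exp (E - Real.log 3) = Real.exp E / 3 := by
      rw [Real.exp_sub, Real.exp_log (by norm_num)]
    have e1 : Real.exp p.1 ≤ Real.exp E / 3 := by rw [← key]; exact Real.exp_le_exp.mpr h1
    have e2 : Real.exp p.2 ≤ Real.exp E / 3 := by rw [← key]; exact Real.exp_le_exp.mpr h2
    have e3 : Real.exp (-p.1 - p.2) ≤ Real.exp E / 3 := by
      rw [← key]; exact Real.exp_le_exp.mpr (by linarith)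
    linarith
  -- toReal bounds, eventually
  have hev : ∀ᶠ E in atTop, 9 / 2 * (E - Real.log 3) ^ 2 / E ^ 2 ≤
      (volume (R E)).toReal / E ^ 2 ∧ (volume (R E)).toReal / E ^ 2 ≤ 9 / 2 := by
    filter_upwards [eventually_ge_atTop (max (Real.log 3) 1)] with E hE
    have hE1 : (1:ℝ) ≤ E := le_trans (le_max_right _ _) hE
    have hE3 : Real.log 3 ≤ E := le_trans (le_max_left _ _) hE
    have hE0 : (0:ℝ) < E ^ 2 := by positivity
    have hfin : volume (R E) ≠ ⊤ :=
      ne_top_of_le_ne_top ENNReal.ofReal_ne_top (hub E (by linarith))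
    have hu : (volume (R E)).toReal ≤ 9 / 2 * E ^ 2 :=
      ENNReal.toReal_le_of_le_ofReal (by positivity) (hub E (by linarith))
    have hl : 9 / 2 * (E - Real.log 3) ^ 2 ≤ (volume (R E)).toReal :=
      (ENNReal.ofReal_le_iff_le_toReal hfin).mp (hlb E hE3)
    constructor
    · exact div_le_div_of_nonneg_right hl hE0.le
    · rw [div_le_iff₀ hE0]; linarith
  -- squeeze
  have hlow : Tendsto (fun E : ℝ => 9 / 2 * (E - Real.log 3) ^ 2 / E ^ 2) atTop
      (nhds (9 / 2)) := by
    have h1 : Tendsto (fun E : ℝ => 9 / 2 * (1 - Real.log 3 / E) ^ 2) atTop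
        (nhds (9 / 2 * (1 - 0) ^ 2)) := by
      exact (tendsto_const_nhds.sub (tendsto_const_nhds.div_atTop tendsto_id)).pow 2
        |>.const_mul _
    have h2 : 9 / 2 * ((1:ℝ) - 0) ^ 2 = 9 / 2 := by norm_num
    rw [h2] at h1
    apply h1.congr'
    filter_upwards [eventually_gt_atTop 0] with E hE
    field_simp
    try ring
  exact tendsto_of_tendsto_of_tendsto_of_le_of_le' hlow tendsto_const_nhds
    (hev.mono fun E h => h.1) (hev.mono fun E h => h.2)
end

section
/- For all real numbers m, n > 0, let vol_{m,n}(E) denote the Lebesgue measure of R_{m,n}(E) = {(x,y) ∈ ℝ² : exp(x) + exp(y) + exp(−m·x − n·y) ≤ exp(E)}. Then vol_{m,n}(E)/E² tends to (m+n+1)²/(2mn) as E → +∞. -/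
open Real Filter MeasureTheory Set

lemma tri_vol (m n : ℝ) (hm : 0 < m) (hn : 0 < n) (c : ℝ) (hc : 0 < c) :
    MeasureTheory.volume {p : ℝ × ℝ | p.1 ≤ c ∧ p.2 ≤ c ∧ -m * p.1 - n * p.2 ≤ c}
      = ENNReal.ofReal ((m + n + 1) ^ 2 / (2 * m * n) * c ^ 2) := by
  set a : ℝ := -(n + 1) * c / m with ha
  set f : ℝ → ℝ := fun x => (-c - m * x) / n with hf
  have hac : a ≤ c := by
    rw [ha, div_le_iff₀ hm]; nlinarith
  have hseteq : {p : ℝ × ℝ | p.1 ≤ c ∧ p.2 ≤ c ∧ -m * p.1 - n * p.2 ≤ c}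
      = {p : ℝ × ℝ | p.1 ∈ Icc a c ∧ p.2 ∈ Icc (f p.1) c} := by
    ext ⟨x, y⟩
    simp only [Set.mem_setOf_eq, Set.mem_Icc]
    constructor
    · rintro ⟨h1, h2, h3⟩
      refine ⟨⟨?_, h1⟩, ?_, h2⟩
      · rw [ha, div_le_iff₀ hm]; nlinarith
      · rw [hf]; dsimp only; rw [div_le_iff₀ hn]; nlinarith
    · rintro ⟨⟨h1, h2⟩, h3, h4⟩
      rw [hf] at h3; dsimp only at h3; rw [div_le_iff₀ hn] at h3
      exact ⟨h2, h4, by nlinarith⟩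
  have hmeas : MeasurableSet {p : ℝ × ℝ | p.1 ≤ c ∧ p.2 ≤ c ∧ -m * p.1 - n * p.2 ≤ c} := by
    simp only [Set.setOf_and]
    exact (measurableSet_le measurable_fst measurable_const).inter
      ((measurableSet_le measurable_snd measurable_const).inter
        (measurableSet_le (by fun_prop) measurable_const))
  rw [hseteq] at hmeas
  rw [hseteq, MeasureTheory.Measure.volume_eq_prod ℝ ℝ, MeasureTheory.Measure.prod_apply hmeas]
  have hslice : ∀ x : ℝ, volume (Prod.mk x ⁻¹' {p : ℝ × ℝ | p.1 ∈ Icc a c ∧ p.2 ∈ Icc (f p.1) c})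
      = Set.indicator (Icc a c) (fun x => ENNReal.ofReal (c - f x)) x := by
    intro x
    by_cases hx : x ∈ Icc a c
    · have : Prod.mk x ⁻¹' {p : ℝ × ℝ | p.1 ∈ Icc a c ∧ p.2 ∈ Icc (f p.1) c} = Icc (f x) c := by
        ext y
        simp only [Set.mem_preimage, Set.mem_setOf_eq, Set.mem_Icc]
        rw [Set.mem_Icc] at hx
        tauto
      rw [this, Real.volume_Icc, Set.indicator_of_mem hx]
    · have : Prod.mk x ⁻¹' {p : ℝ × ℝ | p.1 ∈ Icc a c ∧ p.2 ∈ Icc (f p.1) c} = ∅ := by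
        ext y
        simp only [Set.mem_preimage, Set.mem_setOf_eq, Set.mem_Icc, Set.mem_empty_iff_false,
          iff_false]
        rw [Set.mem_Icc] at hx
        tauto
      rw [this, Set.indicator_of_notMem hx]; simp
  rw [MeasureTheory.lintegral_congr hslice, MeasureTheory.lintegral_indicator measurableSet_Icc (fun x => ENNReal.ofReal (c - f x))]
  have hfcont : Continuous fun x => c - f x := by rw [hf]; fun_prop
  have hint : IntegrableOn (fun x => c - f x) (Icc a c) volume :=
    hfcont.integrableOn_Icc
  have hnn : 0 ≤ᵐ[volume.restrict (Icc a c)] fun x => c - f x := by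
    refine (MeasureTheory.ae_restrict_iff' measurableSet_Icc).2 (.of_forall fun x hx => ?_)
    have := hx.1
    simp only [Pi.zero_apply]
    rw [hf]; dsimp only
    rw [sub_nonneg, div_le_iff₀ hn]
    rw [ha, div_le_iff₀ hm] at this
    nlinarith
  rw [← MeasureTheory.ofReal_integral_eq_lintegral_ofReal hint hnn]
  congr 1
  have : ∀ x : ℝ, c - f x = (c + c / n) + (m / n) * x := by
    intro x; rw [hf]; dsimp only; field_simp; ring
  rw [MeasureTheory.integral_Icc_eq_integral_Ioc, ← intervalIntegral.integral_of_le hac]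
  rw [intervalIntegral.integral_congr (g := fun x => (c + c / n) + (m / n) * x)
    (fun x _ => this x)]
  rw [intervalIntegral.integral_add (intervalIntegrable_const)
    (((by fun_prop : Continuous fun x : ℝ => m / n * x)).intervalIntegrable _ _),
    intervalIntegral.integral_const, intervalIntegral.integral_const_mul]
  have hid : (∫ x in a..c, x) = (c ^ 2 - a ^ 2) / 2 := integral_id
  rw [hid]
  rw [ha]
  field_simp
  linear_combination (c ^ 2 * (2 + 2 * m + 4 * n + 2 * n * m + 2 * n ^ 2)) *
    (n * n⁻¹ * mul_inv_cancel₀ hm.ne' + mul_inv_cancel₀ hn.ne')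

theorem vol_three_term_asymptotics (m n : ℝ) (hm : 0 < m) (hn : 0 < n) :
    Filter.Tendsto
      (fun E : ℝ =>
        (MeasureTheory.volume {p : ℝ × ℝ |
          Real.exp p.1 + Real.exp p.2 + Real.exp (-m * p.1 - n * p.2) ≤ Real.exp E}).toReal
          / E ^ 2)
      Filter.atTop (nhds ((m + n + 1) ^ 2 / (2 * m * n))) := by
  set C : ℝ := (m + n + 1) ^ 2 / (2 * m * n) with hC
  have hCpos : 0 < C := by positivity
  set S : ℝ → Set (ℝ × ℝ) := fun E => {p : ℝ × ℝ |
    Real.exp p.1 + Real.exp p.2 + Real.exp (-m * p.1 - n * p.2) ≤ Real.exp E} with hS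
  set T : ℝ → Set (ℝ × ℝ) := fun c => {p : ℝ × ℝ | p.1 ≤ c ∧ p.2 ≤ c ∧ -m * p.1 - n * p.2 ≤ c}
    with hT
  have hsub1 : ∀ E : ℝ, S E ⊆ T E := by
    intro E p hp
    simp only [hS, Set.mem_setOf_eq] at hp
    have e1 := Real.exp_pos p.1
    have e2 := Real.exp_pos p.2
    have e3 := Real.exp_pos (-m * p.1 - n * p.2)
    refine ⟨?_, ?_, ?_⟩
    · exact Real.exp_le_exp.1 (by linarith)
    · exact Real.exp_le_exp.1 (by linarith)
    · exact Real.exp_le_exp.1 (by linarith)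
  have hsub2 : ∀ E : ℝ, T (E - Real.log 3) ⊆ S E := by
    intro E p hp
    obtain ⟨h1, h2, h3⟩ := hp
    simp only [hS, Set.mem_setOf_eq]
    have key : Real.exp (E - Real.log 3) = Real.exp E / 3 := by
      rw [Real.exp_sub, Real.exp_log (by norm_num : (0:ℝ) < 3)]
    have e1 : Real.exp p.1 ≤ Real.exp E / 3 := key ▸ Real.exp_le_exp.2 h1
    have e2 : Real.exp p.2 ≤ Real.exp E / 3 := key ▸ Real.exp_le_exp.2 h2
    have e3 : Real.exp (-m * p.1 - n * p.2) ≤ Real.exp E / 3 := key ▸ Real.exp_le_exp.2 h3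
    linarith
  have hvolT : ∀ c : ℝ, 0 < c → volume (T c) = ENNReal.ofReal (C * c ^ 2) := fun c hc =>
    tri_vol m n hm hn c hc
  -- squeeze
  have hg : Filter.Tendsto (fun E : ℝ => C * (E - Real.log 3) ^ 2 / E ^ 2) Filter.atTop
      (nhds C) := by
    have h1 : Filter.Tendsto (fun E : ℝ => C * (1 - Real.log 3 * E⁻¹) ^ 2) Filter.atTop
        (nhds C) := by
      have := ((tendsto_inv_atTop_zero (𝕜 := ℝ)).const_mul (Real.log 3)).const_sub 1
      have hsq := (this.pow 2)
      have := hsq.const_mul C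
      simpa using this
    refine h1.congr' ?_
    filter_upwards [Filter.eventually_gt_atTop 0] with E hE
    have hE' : E ≠ 0 := ne_of_gt hE
    field_simp
  refine tendsto_of_tendsto_of_tendsto_of_le_of_le' hg tendsto_const_nhds ?_ ?_
  · -- lower bound eventually
    filter_upwards [Filter.eventually_gt_atTop (max 0 (Real.log 3))] with E hE
    have hE0 : 0 < E := lt_of_le_of_lt (le_max_left _ _) hE
    have hElog : Real.log 3 < E := lt_of_le_of_lt (le_max_right _ _) hE
    have hc : 0 < E - Real.log 3 := by linarith
    have hfin : volume (S E) ≠ ⊤ := by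
      refine ne_top_of_le_ne_top ?_ (measure_mono (hsub1 E))
      rw [hvolT E hE0]; exact ENNReal.ofReal_ne_top
    have hmono : (volume (T (E - Real.log 3))).toReal ≤ (volume (S E)).toReal :=
      ENNReal.toReal_mono hfin (measure_mono (hsub2 E))
    rw [hvolT _ hc, ENNReal.toReal_ofReal (by positivity)] at hmono
    rw [div_le_div_iff₀ (by positivity) (by positivity)]
    calc C * (E - Real.log 3) ^ 2 * E ^ 2 ≤ (volume (S E)).toReal * E ^ 2 := by
          nlinarith [sq_nonneg E, hmono]
      _ = (volume (S E)).toReal * E ^ 2 := rfl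
  · -- upper bound eventually
    filter_upwards [Filter.eventually_gt_atTop 0] with E hE0
    have hleT : (volume (S E)).toReal ≤ C * E ^ 2 := by
      have := ENNReal.toReal_mono (a := volume (S E)) (b := volume (T E))
        (by rw [hvolT E hE0]; exact ENNReal.ofReal_ne_top) (measure_mono (hsub1 E))
      rwa [hvolT E hE0, ENNReal.toReal_ofReal (by positivity)] at this
    rw [div_le_iff₀ (by positivity)]
    calc (volume (S E)).toReal ≤ C * E ^ 2 := hleT
      _ = C * E ^ 2 := rfl
end

section
/- Let ϖ₁(z) = log z + ∑_{j≥1} 3·(3j−1)!/(j!)³·(−z)^j for real z ∈ (0, 1/27), and let θ denote the differential operator θf(z) = z·f′(z). Then ϖ₁ satisfies the Picard–Fuchs equation θ³ϖ₁(z) + 3z·(3θ+2)(3θ+1)θ ϖ₁(z) = 0 for all z ∈ (0, 1/27). -/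
open Real

/-- The coefficients `c_j = 3 (3j-1)! / (j!)^3` of the logarithmic period of local P². -/
noncomputable def localP2c (j : ℕ) : ℝ :=
  3 * (Nat.factorial (3 * j - 1) : ℝ) / ((Nat.factorial j : ℝ)) ^ 3

/-- The power-series part `ϖ̃₁(z) = ∑_{j ≥ 1} c_j (-z)^j` of the logarithmic period. -/
noncomputable def w1tilde (z : ℝ) : ℝ := ∑' j : ℕ, localP2c (j + 1) * (-z) ^ (j + 1)

/-- The logarithmic period `ϖ₁(z) = log z + ϖ̃₁(z)` of local P². -/
noncomputable def w1 (z : ℝ) : ℝ := Real.log z + w1tilde z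

/-- The operator `θ = z d/dz`. -/
noncomputable def theta (f : ℝ → ℝ) : ℝ → ℝ := fun z => z * deriv f z

/-- `(3θ+1)θ` applied to `ϖ₁`. -/
noncomputable def pf1 : ℝ → ℝ := fun z => 3 * theta (theta w1) z + theta w1 z

/-- `(3θ+2)(3θ+1)θ` applied to `ϖ₁`. -/
noncomputable def pf2 : ℝ → ℝ := fun z => 3 * theta pf1 z + 2 * pf1 z

noncomputable def gg (k : ℕ) (z : ℝ) : ℝ :=
  ∑' n : ℕ, localP2c (n + 1) * ((n : ℝ) + 1) ^ k * (-z) ^ (n + 1)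

lemma fact3_le (j : ℕ) : Nat.factorial (3 * j) ≤ 27 ^ j * (Nat.factorial j) ^ 3 := by
  induction j with
  | zero => simp
  | succ n ih =>
    have h1 : Nat.factorial (3 * (n + 1)) =
        (3 * n + 3) * ((3 * n + 2) * ((3 * n + 1) * Nat.factorial (3 * n))) := by
      rw [show 3 * (n + 1) = (3 * n + 2) + 1 by ring, Nat.factorial_succ,
        show 3 * n + 2 = (3 * n + 1) + 1 by ring, Nat.factorial_succ,
        show 3 * n + 1 = (3 * n) + 1 by rfl, Nat.factorial_succ]
    rw [h1]
    calc (3 * n + 3) * ((3 * n + 2) * ((3 * n + 1) * Nat.factorial (3 * n)))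
        ≤ (3 * (n + 1)) * ((3 * (n + 1)) * ((3 * (n + 1)) * (27 ^ n * (Nat.factorial n) ^ 3))) := by
          gcongr <;> omega
      _ = 27 ^ (n + 1) * (Nat.factorial (n + 1)) ^ 3 := by
          rw [Nat.factorial_succ]; ring

lemma localP2c_nonneg (m : ℕ) : 0 ≤ localP2c m := by
  unfold localP2c; positivity

lemma localP2c_le (n : ℕ) : localP2c (n + 1) ≤ 27 ^ (n + 1) := by
  unfold localP2c
  rw [div_le_iff₀ (by positivity)]
  have key : 3 * Nat.factorial (3 * (n + 1) - 1) ≤ 27 ^ (n + 1) * (Nat.factorial (n + 1)) ^ 3 := by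
    have h1 : 3 * (n + 1) - 1 = 3 * n + 2 := by omega
    rw [h1]
    calc 3 * Nat.factorial (3 * n + 2) ≤ (3 * n + 2 + 1) * Nat.factorial (3 * n + 2) :=
          Nat.mul_le_mul_right _ (by omega)
      _ = Nat.factorial (3 * n + 2 + 1) := (Nat.factorial_succ _).symm
      _ = Nat.factorial (3 * (n + 1)) := by congr 1
      _ ≤ 27 ^ (n + 1) * (Nat.factorial (n + 1)) ^ 3 := fact3_le (n + 1)
  exact_mod_cast key

lemma summable_base (k : ℕ) {x : ℝ} (h0 : 0 < x) (h1 : x < 1) :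
    Summable (fun n : ℕ => ((n : ℝ) + 1) ^ k * x ^ n) := by
  have h : Summable (fun n : ℕ => (n : ℝ) ^ k * x ^ n) :=
    summable_pow_mul_geometric_of_norm_lt_one k (by rw [Real.norm_eq_abs, abs_of_pos h0]; exact h1)
  have h2 : Summable (fun n : ℕ => ((n + 1 : ℕ) : ℝ) ^ k * x ^ (n + 1)) :=
    (summable_nat_add_iff 1).2 h
  have h3 := h2.mul_left x⁻¹
  apply h3.congr
  intro n
  push_cast
  rw [pow_succ]
  field_simp

lemma summable_main (k : ℕ) {r : ℝ} (h0 : 0 < r) (h1 : r < 1 / 27) :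
    Summable (fun n : ℕ => localP2c (n + 1) * ((n : ℝ) + 1) ^ k * r ^ n) := by
  have hx0 : (0 : ℝ) < 27 * r := by linarith
  have hx1 : 27 * r < 1 := by linarith
  have hb := (summable_base k hx0 hx1).mul_left 27
  apply Summable.of_nonneg_of_le _ _ hb
  · intro n
    have := localP2c_nonneg (n + 1)
    positivity
  · intro n
    have hc := localP2c_le n
    calc localP2c (n + 1) * ((n : ℝ) + 1) ^ k * r ^ n
        ≤ (27 : ℝ) ^ (n + 1) * ((n : ℝ) + 1) ^ k * r ^ n := by
          gcongr
      _ = 27 * (((n : ℝ) + 1) ^ k * (27 * r) ^ n) := by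
          rw [mul_pow, pow_succ]; ring

lemma summable_tm (k : ℕ) {z : ℝ} (h0 : 0 < z) (h1 : z < 1 / 27) :
    Summable (fun n : ℕ => localP2c (n + 1) * ((n : ℝ) + 1) ^ k * (-z) ^ (n + 1)) := by
  apply Summable.of_norm
  have h := (summable_main k h0 h1).mul_right z
  apply h.congr
  intro n
  have := localP2c_nonneg (n + 1)
  simp only [Real.norm_eq_abs, abs_mul, abs_pow, abs_neg, abs_of_nonneg this, abs_of_pos h0,
    abs_of_nonneg (show (0:ℝ) ≤ (n:ℝ) + 1 by positivity)]
  rw [pow_succ]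
  ring

lemma hasDerivAt_gg (k : ℕ) {z : ℝ} (hz : z ∈ Set.Ioo (0 : ℝ) (1 / 27)) :
    HasDerivAt (gg k)
      (∑' n : ℕ, localP2c (n + 1) * ((n : ℝ) + 1) ^ k * (((n : ℝ) + 1) * (-z) ^ n * (-1))) z := by
  obtain ⟨hz0, hz1⟩ := hz
  set r : ℝ := (z + 1 / 27) / 2 with hr
  have hr0 : 0 < r := by rw [hr]; linarith
  have hzr : z < r := by rw [hr]; linarith
  have hr1 : r < 1 / 27 := by rw [hr]; linarith
  have key := hasDerivAt_tsum_of_isPreconnected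
    (u := fun n : ℕ => localP2c (n + 1) * ((n : ℝ) + 1) ^ (k + 1) * r ^ n)
    (g := fun n x => localP2c (n + 1) * ((n : ℝ) + 1) ^ k * (-x) ^ (n + 1))
    (g' := fun n x => localP2c (n + 1) * ((n : ℝ) + 1) ^ k * (((n : ℝ) + 1) * (-x) ^ n * (-1)))
    (summable_main (k + 1) hr0 hr1) (isOpen_Ioo (a := -r) (b := r)) (isPreconnected_Ioo)
    ?_ ?_ (show z ∈ Set.Ioo (-r) r from ⟨by linarith, hzr⟩) (summable_tm k hz0 hz1)
    (show z ∈ Set.Ioo (-r) r from ⟨by linarith, hzr⟩)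
  · exact key
  · intro n x _
    have hx : HasDerivAt (fun x : ℝ => (-x) ^ (n + 1)) (((n : ℝ) + 1) * (-x) ^ n * (-1)) x := by
      have h1 : HasDerivAt (fun x : ℝ => -x) (-1) x := (hasDerivAt_id x).neg
      have h2 := (hasDerivAt_pow (n + 1) (-x)).comp x h1
      simpa [Function.comp_def] using h2
    simpa [mul_assoc] using hx.const_mul (localP2c (n + 1) * ((n : ℝ) + 1) ^ k)
  · intro n x hx
    have hxr : |x| ≤ r := by
      rw [abs_le]; exact ⟨hx.1.le, hx.2.le⟩
    have hcn := localP2c_nonneg (n + 1)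
    have hn1 : (0:ℝ) ≤ (n : ℝ) + 1 := by positivity
    rw [norm_mul, norm_mul, norm_mul, norm_mul, norm_pow, norm_pow, norm_neg, norm_neg]
    simp only [Real.norm_eq_abs, norm_one]
    rw [abs_of_nonneg hcn, abs_of_nonneg hn1]
    calc localP2c (n + 1) * ((n:ℝ) + 1) ^ k * (((n:ℝ) + 1) * |x| ^ n * 1)
        ≤ localP2c (n + 1) * ((n:ℝ) + 1) ^ k * (((n:ℝ) + 1) * r ^ n * 1) := by
          gcongr
      _ = localP2c (n + 1) * ((n:ℝ) + 1) ^ (k + 1) * r ^ n := by rw [pow_succ]; ring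

lemma zmul (k : ℕ) (z : ℝ) :
    z * (∑' n : ℕ, localP2c (n + 1) * ((n : ℝ) + 1) ^ k * (((n : ℝ) + 1) * (-z) ^ n * (-1)))
      = gg (k + 1) z := by
  rw [gg, ← tsum_mul_left]
  apply tsum_congr
  intro n
  rw [pow_succ ((n:ℝ)+1), pow_succ (-z)]
  ring

lemma theta_hasDeriv {f : ℝ → ℝ} {z d : ℝ} (h : HasDerivAt f d z) : theta f z = z * d := by
  rw [theta, h.deriv]

lemma theta_gg (k : ℕ) {z : ℝ} (hz : z ∈ Set.Ioo (0 : ℝ) (1 / 27)) :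
    theta (gg k) z = gg (k + 1) z :=
  (theta_hasDeriv (hasDerivAt_gg k hz)).trans (zmul k z)

lemma w1tilde_eq : w1tilde = gg 0 := by
  funext z
  rw [w1tilde, gg]
  exact tsum_congr fun n => by rw [pow_zero, mul_one]

lemma theta_eventually {f g : ℝ → ℝ} {z : ℝ} (hz : z ∈ Set.Ioo (0 : ℝ) (1 / 27))
    (h : ∀ w ∈ Set.Ioo (0 : ℝ) (1 / 27), f w = g w) : theta f z = theta g z := by
  have hev : f =ᶠ[nhds z] g := Filter.eventuallyEq_of_mem (isOpen_Ioo.mem_nhds hz) h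
  rw [theta, theta, hev.deriv_eq]

lemma theta_w1 {z : ℝ} (hz : z ∈ Set.Ioo (0 : ℝ) (1 / 27)) :
    theta w1 z = 1 + gg 1 z := by
  have hlog := Real.hasDerivAt_log (ne_of_gt hz.1)
  have hg := hasDerivAt_gg 0 hz
  have hw : HasDerivAt w1 (z⁻¹ + ∑' n : ℕ,
      localP2c (n + 1) * ((n : ℝ) + 1) ^ 0 * (((n : ℝ) + 1) * (-z) ^ n * (-1))) z := by
    have := hlog.add hg
    have heq : w1 = fun y => Real.log y + gg 0 y := by
      funext y; rw [w1, w1tilde_eq]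
    rw [heq]
    exact this
  rw [theta_hasDeriv hw, mul_add, mul_inv_cancel₀ (ne_of_gt hz.1), zmul]

lemma theta2_w1 {z : ℝ} (hz : z ∈ Set.Ioo (0 : ℝ) (1 / 27)) :
    theta (theta w1) z = gg 2 z := by
  rw [theta_eventually hz (fun w hw => theta_w1 hw)]
  have hd : HasDerivAt (fun w => 1 + gg 1 w)
      (∑' n : ℕ, localP2c (n + 1) * ((n : ℝ) + 1) ^ 1 * (((n : ℝ) + 1) * (-z) ^ n * (-1))) z :=
    (hasDerivAt_gg 1 hz).const_add 1
  rw [theta_hasDeriv hd, zmul]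

lemma theta3_w1 {z : ℝ} (hz : z ∈ Set.Ioo (0 : ℝ) (1 / 27)) :
    theta (theta (theta w1)) z = gg 3 z := by
  rw [theta_eventually hz (fun w hw => theta2_w1 hw)]
  exact theta_gg 2 hz

lemma pf1_eq {z : ℝ} (hz : z ∈ Set.Ioo (0 : ℝ) (1 / 27)) :
    pf1 z = 3 * gg 2 z + (1 + gg 1 z) := by
  rw [pf1, theta2_w1 hz, theta_w1 hz]

lemma theta_pf1 {z : ℝ} (hz : z ∈ Set.Ioo (0 : ℝ) (1 / 27)) :
    theta pf1 z = 3 * gg 3 z + gg 2 z := by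
  rw [theta_eventually hz (fun w hw => pf1_eq hw)]
  have h2 := hasDerivAt_gg 2 hz
  have h1 := hasDerivAt_gg 1 hz
  have hd : HasDerivAt (fun w => 3 * gg 2 w + (1 + gg 1 w)) _ z := (h2.const_mul 3).add (h1.const_add 1)
  rw [theta_hasDeriv hd, mul_add, mul_left_comm, zmul, zmul]

lemma pf2_eq {z : ℝ} (hz : z ∈ Set.Ioo (0 : ℝ) (1 / 27)) :
    pf2 z = 9 * gg 3 z + 9 * gg 2 z + 2 * gg 1 z + 2 := by
  rw [pf2, theta_pf1 hz, pf1_eq hz]; ring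

lemma localP2c_rec (n : ℕ) :
    localP2c (n + 2) * ((n : ℝ) + 2) ^ 3
      = 3 * localP2c (n + 1) * (9 * ((n:ℝ) + 1) ^ 3 + 9 * ((n:ℝ) + 1) ^ 2 + 2 * ((n:ℝ) + 1)) := by
  unfold localP2c
  have e2 : 3 * (n + 2) - 1 = (3 * n + 4) + 1 := by omega
  have e1 : 3 * (n + 1) - 1 = 3 * n + 2 := by omega
  rw [e2, e1, Nat.factorial_succ, show 3 * n + 4 = (3 * n + 3) + 1 from rfl, Nat.factorial_succ,
    show 3 * n + 3 = (3 * n + 2) + 1 from rfl, Nat.factorial_succ,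
    show n + 2 = (n + 1) + 1 from rfl, Nat.factorial_succ (n + 1)]
  have hf1 : (0:ℝ) < (Nat.factorial (n + 1) : ℝ) := by exact_mod_cast (Nat.factorial_pos _)
  push_cast
  field_simp
  ring

lemma c1_val : localP2c 1 = 6 := by
  norm_num [localP2c, Nat.factorial]

lemma key_identity {z : ℝ} (hz : z ∈ Set.Ioo (0 : ℝ) (1 / 27)) :
    gg 3 z + 3 * z * (9 * gg 3 z + 9 * gg 2 z + 2 * gg 1 z + 2) = 0 := by
  obtain ⟨hz0, hz1⟩ := hz
  have S1 := summable_tm 1 hz0 hz1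
  have S2 := summable_tm 2 hz0 hz1
  have S3 := summable_tm 3 hz0 hz1
  -- combine 9 gg3 + 9 gg2 + 2 gg1 into a single tsum
  have hA : 9 * gg 3 z + 9 * gg 2 z + 2 * gg 1 z
      = ∑' n : ℕ, localP2c (n + 1)
          * (9 * ((n:ℝ) + 1) ^ 3 + 9 * ((n:ℝ) + 1) ^ 2 + 2 * ((n:ℝ) + 1)) * (-z) ^ (n + 1) := by
    rw [gg, gg, gg, ← tsum_mul_left, ← tsum_mul_left, ← tsum_mul_left,
      ← Summable.tsum_add (S3.mul_left 9) (S2.mul_left 9),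
      ← Summable.tsum_add ((S3.mul_left 9).add (S2.mul_left 9)) (S1.mul_left 2)]
    exact tsum_congr fun n => by ring
  have hsplit := Summable.tsum_eq_zero_add
    (f := fun n : ℕ => localP2c (n + 1) * ((n : ℝ) + 1) ^ 3 * (-z) ^ (n + 1)) S3
  have hterm0 : localP2c (0 + 1) * (((0:ℕ) : ℝ) + 1) ^ 3 * (-z) ^ (0 + 1) = -(6 * z) := by
    norm_num [c1_val]
  have hshift : (∑' n : ℕ, localP2c (n + 1 + 1) * (((n + 1 : ℕ):ℝ) + 1) ^ 3 * (-z) ^ (n + 1 + 1))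
      = ∑' n : ℕ, 3 * localP2c (n + 1)
          * (9 * ((n:ℝ) + 1) ^ 3 + 9 * ((n:ℝ) + 1) ^ 2 + 2 * ((n:ℝ) + 1)) * (-z) ^ (n + 2) := by
    apply tsum_congr
    intro n
    have : (((n + 1 : ℕ):ℝ) + 1) = (n:ℝ) + 2 := by push_cast; ring
    rw [this, show n + 1 + 1 = n + 2 from rfl, localP2c_rec n]
  have h3zA : 3 * z * (∑' n : ℕ, localP2c (n + 1)
          * (9 * ((n:ℝ) + 1) ^ 3 + 9 * ((n:ℝ) + 1) ^ 2 + 2 * ((n:ℝ) + 1)) * (-z) ^ (n + 1))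
      = -(∑' n : ℕ, 3 * localP2c (n + 1)
          * (9 * ((n:ℝ) + 1) ^ 3 + 9 * ((n:ℝ) + 1) ^ 2 + 2 * ((n:ℝ) + 1)) * (-z) ^ (n + 2)) := by
    rw [← tsum_mul_left, ← tsum_neg]
    apply tsum_congr
    intro n
    rw [show n + 2 = (n + 1) + 1 from rfl, pow_succ (-z) (n + 1)]
    ring
  rw [mul_add, hA, h3zA, gg, hsplit]
  beta_reduce
  rw [hterm0, hshift]
  ring

theorem picard_fuchs_w1 :
    ∀ z ∈ Set.Ioo (0 : ℝ) (1 / 27),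
      theta (theta (theta w1)) z + 3 * z * pf2 z = 0 := by
  intro z hz
  rw [theta3_w1 hz, pf2_eq hz]
  have h := key_identity hz
  linarith
end
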